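/- Let K be a square of side 2h, u ∈ P₄(K), v ∈ P_T(K) = P₂ + span{x₁³,x₂³}, and Π_K the rectangular Morley interpolation on K. Then the Hessian inner product satisfies ∫_K ∇²(u-Π_K u) : ∇²v dx₁dx₂ = (h²/3)[∫_K (∂³u/∂x₁∂x₂²)(∂³v/∂x₁³) dx + ∫_K (∂³u/∂x₁²∂x₂)(∂³v/∂x₂³) dx]. -/

import Mathlib

open MeasureTheory Set

/-- Partial derivative in the first variable. -/
noncomputable def pd1 (f : ℝ → ℝ → ℝ) : ℝ → ℝ → ℝ := fun x y => deriv (fun t => f t y) x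
/-- Partial derivative in the second variable. -/
noncomputable def pd2 (f : ℝ → ℝ → ℝ) : ℝ → ℝ → ℝ := fun x y => deriv (fun t => f x t) y

/-- Membership in P₄(ℝ²): bivariate polynomials of total degree ≤ 4. -/
def MemP4 (u : ℝ → ℝ → ℝ) : Prop :=
  ∃ c : Fin 5 → Fin 5 → ℝ, (∀ i j : Fin 5, 4 < i.1 + j.1 → c i j = 0) ∧
    ∀ x y : ℝ, u x y = ∑ i : Fin 5, ∑ j : Fin 5, c i j * x ^ (i : ℕ) * y ^ (j : ℕ)

/-- Membership in the 2D rectangular Morley shape space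
P_T = P₂(ℝ²) + span{x₁³, x₂³}. -/
def MemPT2 (v : ℝ → ℝ → ℝ) : Prop :=
  ∃ a₀ a₁ a₂ a₃ a₄ a₅ b₁ b₂ : ℝ, ∀ x y : ℝ,
    v x y = a₀ + a₁ * x + a₂ * y + a₃ * x ^ 2 + a₄ * x * y + a₅ * y ^ 2
      + b₁ * x ^ 3 + b₂ * y ^ 3

lemma hasDerivAt_poly (A B C D E F x : ℝ) :
    HasDerivAt (fun t : ℝ => A + B * t + C * t ^ 2 + D * t ^ 3 + E * t ^ 4 + F * t ^ 5)
      (B + 2 * C * x + 3 * D * x ^ 2 + 4 * E * x ^ 3 + 5 * F * x ^ 4) x := by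
  have h1 : HasDerivAt (fun t : ℝ => t) 1 x := hasDerivAt_id x
  have h2 := hasDerivAt_pow 2 x
  have h3 := hasDerivAt_pow 3 x
  have h4 := hasDerivAt_pow 4 x
  have h5 := hasDerivAt_pow 5 x
  have hs := (((((hasDerivAt_const x A).add (h1.const_mul B)).add
      (h2.const_mul C)).add (h3.const_mul D)).add (h4.const_mul E)).add (h5.const_mul F)
  refine hs.congr_deriv ?_
  push_cast
  ring

lemma deriv_poly4 (A B C D E x : ℝ) :
    deriv (fun t : ℝ => A + B * t + C * t ^ 2 + D * t ^ 3 + E * t ^ 4) x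
      = B + 2 * C * x + 3 * D * x ^ 2 + 4 * E * x ^ 3 := by
  have h := hasDerivAt_poly A B C D E 0 x
  simp only [zero_mul, add_zero, mul_zero] at h
  exact h.deriv

lemma inner_eval {a b : ℝ} (hab : a ≤ b) (f : ℝ → ℝ) (A B C D E r : ℝ)
    (hf : ∀ y, f y = A + B * y + C * y ^ 2 + D * y ^ 3 + E * y ^ 4)
    (hr : A * (b - a) + B / 2 * (b ^ 2 - a ^ 2) + C / 3 * (b ^ 3 - a ^ 3)
        + D / 4 * (b ^ 4 - a ^ 4) + E / 5 * (b ^ 5 - a ^ 5) = r) :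
    (∫ y in Icc a b, f y) = r := by
  have hfe : f = fun y => A + B * y + C * y ^ 2 + D * y ^ 3 + E * y ^ 4 := funext hf
  subst hfe
  rw [MeasureTheory.integral_Icc_eq_integral_Ioc, ← intervalIntegral.integral_of_le hab]
  have hFTC := intervalIntegral.integral_eq_sub_of_hasDerivAt
    (f := fun t : ℝ => 0 + A * t + B / 2 * t ^ 2 + C / 3 * t ^ 3 + D / 4 * t ^ 4 + E / 5 * t ^ 5)
    (f' := fun y : ℝ => A + B * y + C * y ^ 2 + D * y ^ 3 + E * y ^ 4)
    (a := a) (b := b)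
    (fun t _ => by
      have := hasDerivAt_poly 0 A (B / 2) (C / 3) (D / 4) (E / 5) t
      refine this.congr_deriv ?_
      ring)
    (((by fun_prop : Continuous fun y : ℝ => A + B * y + C * y ^ 2 + D * y ^ 3 + E * y ^ 4)).intervalIntegrable a b)
  rw [hFTC, ← hr]
  ring

set_option maxHeartbeats 4000000 in
/-- For u ∈ P₄(K), v ∈ P_T(K) and the rectangular Morley interpolation Π_K, the
Frobenius inner product of the Hessians satisfies
∫_K ∇²(u-Π_K u):∇²v = (h²/3)[∫_K ∂³u/∂x₁∂x₂²·∂³v/∂x₁³ + ∫_K ∂³u/∂x₁²∂x₂·∂³v/∂x₂³]. -/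
theorem stmt15 (h x₁c x₂c : ℝ) (hh : 0 < h)
    (u Pu v : ℝ → ℝ → ℝ) (hu : MemP4 u) (hPu : MemPT2 Pu) (hv : MemPT2 v)
    (hvtx : ∀ s ∈ ({x₁c - h, x₁c + h} : Set ℝ), ∀ t ∈ ({x₂c - h, x₂c + h} : Set ℝ),
      Pu s t = u s t)
    (hedge1 : ∀ s ∈ ({x₁c - h, x₁c + h} : Set ℝ),
      (∫ t in Icc (x₂c - h) (x₂c + h), pd1 Pu s t) =
        ∫ t in Icc (x₂c - h) (x₂c + h), pd1 u s t)
    (hedge2 : ∀ t ∈ ({x₂c - h, x₂c + h} : Set ℝ),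
      (∫ s in Icc (x₁c - h) (x₁c + h), pd2 Pu s t) =
        ∫ s in Icc (x₁c - h) (x₁c + h), pd2 u s t) :
    (∫ x in Icc (x₁c - h) (x₁c + h), ∫ y in Icc (x₂c - h) (x₂c + h),
      (pd1 (pd1 (fun s t => u s t - Pu s t)) x y * pd1 (pd1 v) x y
        + pd2 (pd1 (fun s t => u s t - Pu s t)) x y * pd2 (pd1 v) x y
        + pd1 (pd2 (fun s t => u s t - Pu s t)) x y * pd1 (pd2 v) x y
        + pd2 (pd2 (fun s t => u s t - Pu s t)) x y * pd2 (pd2 v) x y)) =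
    (h ^ 2 / 3) *
      ((∫ x in Icc (x₁c - h) (x₁c + h), ∫ y in Icc (x₂c - h) (x₂c + h),
          pd1 (pd2 (pd2 u)) x y * pd1 (pd1 (pd1 v)) x y)
        + ∫ x in Icc (x₁c - h) (x₁c + h), ∫ y in Icc (x₂c - h) (x₂c + h),
          pd2 (pd1 (pd1 u)) x y * pd2 (pd2 (pd2 v)) x y) := by
  
  obtain ⟨c, hc0, hcu⟩ := hu
  obtain ⟨A0, A1, A2, A3, A4, A5, A6, A7, hPueq0⟩ := hPu
  obtain ⟨B0, B1, B2, B3, B4, B5, B6, B7, hveq0⟩ := hv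
  have hle1 : x₁c - h ≤ x₁c + h := by linarith
  have hle2 : x₂c - h ≤ x₂c + h := by linarith
  have hueq : u = fun x y => (1) * (c 0 0) + (1) * y * (c 0 1) + (1) * y ^ 2 * (c 0 2) + (1) * y ^ 3 * (c 0 3) + (1) * y ^ 4 * (c 0 4) + (1) * x * (c 1 0) + (1) * x * y * (c 1 1) + (1) * x * y ^ 2 * (c 1 2) + (1) * x * y ^ 3 * (c 1 3) + (1) * x ^ 2 * (c 2 0) + (1) * x ^ 2 * y * (c 2 1) + (1) * x ^ 2 * y ^ 2 * (c 2 2) + (1) * x ^ 3 * (c 3 0) + (1) * x ^ 3 * y * (c 3 1) + (1) * x ^ 4 * (c 4 0) := by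
    funext x y
    rw [hcu x y]
    simp only [Fin.sum_univ_five, Fin.val_zero, Fin.val_one, Fin.val_two, pow_zero, pow_one,
      show ((2:Fin 5):ℕ) = 2 from rfl, show ((3:Fin 5):ℕ) = 3 from rfl, show ((4:Fin 5):ℕ) = 4 from rfl]
    rw [hc0 1 4 (by decide), hc0 2 3 (by decide), hc0 2 4 (by decide),
        hc0 3 2 (by decide), hc0 3 3 (by decide), hc0 3 4 (by decide),
        hc0 4 1 (by decide), hc0 4 2 (by decide), hc0 4 3 (by decide),
        hc0 4 4 (by decide)]
    ring
  have hPueq : Pu = fun x y => (1) * A0 + (1) * y * A2 + (1) * y ^ 2 * A5 + (1) * y ^ 3 * A7 + (1) * x * A1 + (1) * x * y * A4 + (1) * x ^ 2 * A3 + (1) * x ^ 3 * A6 := by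
    funext x y
    rw [hPueq0 x y]
    ring
  have hveq : v = fun x y => (1) * B0 + (1) * y * B2 + (1) * y ^ 2 * B5 + (1) * y ^ 3 * B7 + (1) * x * B1 + (1) * x * y * B4 + (1) * x ^ 2 * B3 + (1) * x ^ 3 * B6 := by
    funext x y
    rw [hveq0 x y]
    ring
  have hWeq : (fun s t => u s t - Pu s t) = fun x y => (-1) * A0 + (1) * (c 0 0) + (-1) * y * A2 + (1) * y * (c 0 1) + (-1) * y ^ 2 * A5 + (1) * y ^ 2 * (c 0 2) + (-1) * y ^ 3 * A7 + (1) * y ^ 3 * (c 0 3) + (1) * y ^ 4 * (c 0 4) + (-1) * x * A1 + (1) * x * (c 1 0) + (-1) * x * y * A4 + (1) * x * y * (c 1 1) + (1) * x * y ^ 2 * (c 1 2) + (1) * x * y ^ 3 * (c 1 3) + (-1) * x ^ 2 * A3 + (1) * x ^ 2 * (c 2 0) + (1) * x ^ 2 * y * (c 2 1) + (1) * x ^ 2 * y ^ 2 * (c 2 2) + (-1) * x ^ 3 * A6 + (1) * x ^ 3 * (c 3 0) + (1) * x ^ 3 * y * (c 3 1) + (1) * x ^ 4 * (c 4 0) :=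 by
    rw [hueq, hPueq]
    funext s t
    simp only []
    ring
  have dW1 : pd1 (fun s t => u s t - Pu s t) = fun x y => (-1) * A1 + (1) * (c 1 0) + (-1) * y * A4 + (1) * y * (c 1 1) + (1) * y ^ 2 * (c 1 2) + (1) * y ^ 3 * (c 1 3) + (-2) * x * A3 + (2) * x * (c 2 0) + (2) * x * y * (c 2 1) + (2) * x * y ^ 2 * (c 2 2) + (-3) * x ^ 2 * A6 + (3) * x ^ 2 * (c 3 0) + (3) * x ^ 2 * y * (c 3 1) + (4) * x ^ 3 * (c 4 0) := by
    rw [hWeq]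
    funext x y
    show deriv (fun t : ℝ => (-1) * A0 + (1) * (c 0 0) + (-1) * y * A2 + (1) * y * (c 0 1) + (-1) * y ^ 2 * A5 + (1) * y ^ 2 * (c 0 2) + (-1) * y ^ 3 * A7 + (1) * y ^ 3 * (c 0 3) + (1) * y ^ 4 * (c 0 4) + (-1) * t * A1 + (1) * t * (c 1 0) + (-1) * t * y * A4 + (1) * t * y * (c 1 1) + (1) * t * y ^ 2 * (c 1 2) + (1) * t * y ^ 3 * (c 1 3) + (-1) * t ^ 2 * A3 + (1) * t ^ 2 * (c 2 0) + (1) * t ^ 2 * y * (c 2 1) + (1) * t ^ 2 * y ^ 2 * (c 2 2) + (-1) * t ^ 3 * A6 + (1) * t ^ 3 * (c 3 0) + (1) * t ^ 3 * y * (c 3 1) + (1) * t ^ 4 * (c 4 0)) x = _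
    rw [show (fun t : ℝ => (-1) * A0 + (1) * (c 0 0) + (-1) * y * A2 + (1) * y * (c 0 1) + (-1) * y ^ 2 * A5 + (1) * y ^ 2 * (c 0 2) + (-1) * y ^ 3 * A7 + (1) * y ^ 3 * (c 0 3) + (1) * y ^ 4 * (c 0 4) + (-1) * t * A1 + (1) * t * (c 1 0) + (-1) * t * y * A4 + (1) * t * y * (c 1 1) + (1) * t * y ^ 2 * (c 1 2) + (1) * t * y ^ 3 * (c 1 3) + (-1) * t ^ 2 * A3 + (1) * t ^ 2 * (c 2 0) + (1) * t ^ 2 * y * (c 2 1) + (1) * t ^ 2 * y ^ 2 * (c 2 2) + (-1) * t ^ 3 * A6 + (1) * t ^ 3 * (c 3 0) + (1) * t ^ 3 * y * (c 3 1) + (1) * t ^ 4 * (c 4 0)) = (fun t : ℝ => ((-1) * A0 + (1) * (c 0 0) + (-1) * y * A2 + (1) * y * (c 0 1) + (-1) * y ^ 2 * A5 + (1) * y ^ 2 * (c 0 2) + (-1) * y ^ 3 * A7 + (1) * y ^ 3 * (c 0 3) + (1) * y ^ 4 * (c 0 4)) + ((-1) * A1 + (1) * (c 1 0) + (-1) *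 y * A4 + (1) * y * (c 1 1) + (1) * y ^ 2 * (c 1 2) + (1) * y ^ 3 * (c 1 3)) * t + ((-1) * A3 + (1) * (c 2 0) + (1) * y * (c 2 1) + (1) * y ^ 2 * (c 2 2)) * t ^ 2 + ((-1) * A6 + (1) * (c 3 0) + (1) * y * (c 3 1)) * t ^ 3 + ((1) * (c 4 0)) * t ^ 4) from funext fun t => by ring]
    rw [deriv_poly4]
    ring
  have dW2 : pd2 (fun s t => u s t - Pu s t) = fun x y => (-1) * A2 + (1) * (c 0 1) + (-2) * y * A5 + (2) * y * (c 0 2) + (-3) * y ^ 2 * A7 + (3) * y ^ 2 * (c 0 3) + (4) * y ^ 3 * (c 0 4) + (-1) * x * A4 + (1) * x * (c 1 1) + (2) * x * y * (c 1 2) + (3) * x * y ^ 2 * (c 1 3) + (1) * x ^ 2 * (c 2 1) + (2) * x ^ 2 * y * (c 2 2) + (1) * x ^ 3 * (c 3 1) := by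
    rw [hWeq]
    funext x y
    show deriv (fun t : ℝ => (-1) * A0 + (1) * (c 0 0) + (-1) * t * A2 + (1) * t * (c 0 1) + (-1) * t ^ 2 * A5 + (1) * t ^ 2 * (c 0 2) + (-1) * t ^ 3 * A7 + (1) * t ^ 3 * (c 0 3) + (1) * t ^ 4 * (c 0 4) + (-1) * x * A1 + (1) * x * (c 1 0) + (-1) * x * t * A4 + (1) * x * t * (c 1 1) + (1) * x * t ^ 2 * (c 1 2) + (1) * x * t ^ 3 * (c 1 3) + (-1) * x ^ 2 * A3 + (1) * x ^ 2 * (c 2 0) + (1) * x ^ 2 * t * (c 2 1) + (1) * x ^ 2 * t ^ 2 * (c 2 2) + (-1) * x ^ 3 * A6 + (1) * x ^ 3 * (c 3 0) + (1) * x ^ 3 * t * (c 3 1) + (1) * x ^ 4 * (c 4 0)) y = _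
    rw [show (fun t : ℝ => (-1) * A0 + (1) * (c 0 0) + (-1) * t * A2 + (1) * t * (c 0 1) + (-1) * t ^ 2 * A5 + (1) * t ^ 2 * (c 0 2) + (-1) * t ^ 3 * A7 + (1) * t ^ 3 * (c 0 3) + (1) * t ^ 4 * (c 0 4) + (-1) * x * A1 + (1) * x * (c 1 0) + (-1) * x * t * A4 + (1) * x * t * (c 1 1) + (1) * x * t ^ 2 * (c 1 2) + (1) * x * t ^ 3 * (c 1 3) + (-1) * x ^ 2 * A3 + (1) * x ^ 2 * (c 2 0) + (1) * x ^ 2 * t * (c 2 1) + (1) * x ^ 2 * t ^ 2 * (c 2 2) + (-1) * x ^ 3 * A6 + (1) * x ^ 3 * (c 3 0) + (1) * x ^ 3 * t * (c 3 1) + (1) * x ^ 4 * (c 4 0)) = (fun t : ℝ => ((-1) * A0 + (1) * (c 0 0) + (-1) * x * A1 + (1) * x * (c 1 0) + (-1) * x ^ 2 * A3 + (1) * x ^ 2 * (c 2 0) + (-1) * x ^ 3 * A6 + (1) * x ^ 3 * (c 3 0) + (1) * x ^ 4 * (c 4 0)) + ((-1) * A2 + (1) * (c 0 1) + (-1) *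 x * A4 + (1) * x * (c 1 1) + (1) * x ^ 2 * (c 2 1) + (1) * x ^ 3 * (c 3 1)) * t + ((-1) * A5 + (1) * (c 0 2) + (1) * x * (c 1 2) + (1) * x ^ 2 * (c 2 2)) * t ^ 2 + ((-1) * A7 + (1) * (c 0 3) + (1) * x * (c 1 3)) * t ^ 3 + ((1) * (c 0 4)) * t ^ 4) from funext fun t => by ring]
    rw [deriv_poly4]
    ring
  have dW11 : pd1 (pd1 (fun s t => u s t - Pu s t)) = fun x y => (-2) * A3 + (2) * (c 2 0) + (2) * y * (c 2 1) + (2) * y ^ 2 * (c 2 2) + (-6) * x * A6 + (6) * x * (c 3 0) + (6) * x * y * (c 3 1) + (12) * x ^ 2 * (c 4 0) := by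
    rw [dW1]
    funext x y
    show deriv (fun t : ℝ => (-1) * A1 + (1) * (c 1 0) + (-1) * y * A4 + (1) * y * (c 1 1) + (1) * y ^ 2 * (c 1 2) + (1) * y ^ 3 * (c 1 3) + (-2) * t * A3 + (2) * t * (c 2 0) + (2) * t * y * (c 2 1) + (2) * t * y ^ 2 * (c 2 2) + (-3) * t ^ 2 * A6 + (3) * t ^ 2 * (c 3 0) + (3) * t ^ 2 * y * (c 3 1) + (4) * t ^ 3 * (c 4 0)) x = _
    rw [show (fun t : ℝ => (-1) * A1 + (1) * (c 1 0) + (-1) * y * A4 + (1) * y * (c 1 1) + (1) * y ^ 2 * (c 1 2) + (1) * y ^ 3 * (c 1 3) + (-2) * t * A3 + (2) * t * (c 2 0) + (2) * t * y * (c 2 1) + (2) * t * y ^ 2 * (c 2 2) + (-3) * t ^ 2 * A6 + (3) * t ^ 2 * (c 3 0) + (3) * t ^ 2 * y * (c 3 1) + (4) * t ^ 3 * (c 4 0)) = (fun t : ℝ => ((-1) * A1 + (1) * (c 1 0) + (-1) * y * A4 + (1) * y * (c 1 1) + (1) * y ^ 2 * (c 1 2) + (1) * y ^ 3 * (c 1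 3)) + ((-2) * A3 + (2) * (c 2 0) + (2) * y * (c 2 1) + (2) * y ^ 2 * (c 2 2)) * t + ((-3) * A6 + (3) * (c 3 0) + (3) * y * (c 3 1)) * t ^ 2 + ((4) * (c 4 0)) * t ^ 3 + (0) * t ^ 4) from funext fun t => by ring]
    rw [deriv_poly4]
    ring
  have dW12 : pd2 (pd1 (fun s t => u s t - Pu s t)) = fun x y => (-1) * A4 + (1) * (c 1 1) + (2) * y * (c 1 2) + (3) * y ^ 2 * (c 1 3) + (2) * x * (c 2 1) + (4) * x * y * (c 2 2) + (3) * x ^ 2 * (c 3 1) := by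
    rw [dW1]
    funext x y
    show deriv (fun t : ℝ => (-1) * A1 + (1) * (c 1 0) + (-1) * t * A4 + (1) * t * (c 1 1) + (1) * t ^ 2 * (c 1 2) + (1) * t ^ 3 * (c 1 3) + (-2) * x * A3 + (2) * x * (c 2 0) + (2) * x * t * (c 2 1) + (2) * x * t ^ 2 * (c 2 2) + (-3) * x ^ 2 * A6 + (3) * x ^ 2 * (c 3 0) + (3) * x ^ 2 * t * (c 3 1) + (4) * x ^ 3 * (c 4 0)) y = _
    rw [show (fun t : ℝ => (-1) * A1 + (1) * (c 1 0) + (-1) * t * A4 + (1) * t * (c 1 1) + (1) * t ^ 2 * (c 1 2) + (1) * t ^ 3 * (c 1 3) + (-2) * x * A3 + (2) * x * (c 2 0) + (2) * x * t * (c 2 1) + (2) * x * t ^ 2 * (c 2 2) + (-3) * x ^ 2 * A6 + (3) * x ^ 2 * (c 3 0) + (3) * x ^ 2 * t * (c 3 1) + (4) * x ^ 3 * (c 4 0)) = (fun t : ℝ => ((-1) * A1 + (1) * (c 1 0) + (-2) * x * A3 + (2) * x * (c 2 0) + (-3) * x ^ 2 * A6 + (3) * x ^ 2 * (c 3 0)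 + (4) * x ^ 3 * (c 4 0)) + ((-1) * A4 + (1) * (c 1 1) + (2) * x * (c 2 1) + (3) * x ^ 2 * (c 3 1)) * t + ((1) * (c 1 2) + (2) * x * (c 2 2)) * t ^ 2 + ((1) * (c 1 3)) * t ^ 3 + (0) * t ^ 4) from funext fun t => by ring]
    rw [deriv_poly4]
    ring
  have dW21 : pd1 (pd2 (fun s t => u s t - Pu s t)) = fun x y => (-1) * A4 + (1) * (c 1 1) + (2) * y * (c 1 2) + (3) * y ^ 2 * (c 1 3) + (2) * x * (c 2 1) + (4) * x * y * (c 2 2) + (3) * x ^ 2 * (c 3 1) := by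
    rw [dW2]
    funext x y
    show deriv (fun t : ℝ => (-1) * A2 + (1) * (c 0 1) + (-2) * y * A5 + (2) * y * (c 0 2) + (-3) * y ^ 2 * A7 + (3) * y ^ 2 * (c 0 3) + (4) * y ^ 3 * (c 0 4) + (-1) * t * A4 + (1) * t * (c 1 1) + (2) * t * y * (c 1 2) + (3) * t * y ^ 2 * (c 1 3) + (1) * t ^ 2 * (c 2 1) + (2) * t ^ 2 * y * (c 2 2) + (1) * t ^ 3 * (c 3 1)) x = _
    rw [show (fun t : ℝ => (-1) * A2 + (1) * (c 0 1) + (-2) * y * A5 + (2) * y * (c 0 2) + (-3) * y ^ 2 * A7 + (3) * y ^ 2 * (c 0 3) + (4) * y ^ 3 * (c 0 4) + (-1) * t * A4 + (1) * t * (c 1 1) + (2) * t * y * (c 1 2) + (3) * t * y ^ 2 * (c 1 3) + (1) * t ^ 2 * (c 2 1) + (2) * t ^ 2 * y * (c 2 2) + (1) * t ^ 3 * (c 3 1)) = (fun t : ℝ => ((-1) * A2 + (1) * (c 0 1) + (-2) * y * A5 + (2) * y * (c 0 2) + (-3) * y ^ 2 * A7 + (3) * y ^ 2 * (c 0 3)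 + (4) * y ^ 3 * (c 0 4)) + ((-1) * A4 + (1) * (c 1 1) + (2) * y * (c 1 2) + (3) * y ^ 2 * (c 1 3)) * t + ((1) * (c 2 1) + (2) * y * (c 2 2)) * t ^ 2 + ((1) * (c 3 1)) * t ^ 3 + (0) * t ^ 4) from funext fun t => by ring]
    rw [deriv_poly4]
    ring
  have dW22 : pd2 (pd2 (fun s t => u s t - Pu s t)) = fun x y => (-2) * A5 + (2) * (c 0 2) + (-6) * y * A7 + (6) * y * (c 0 3) + (12) * y ^ 2 * (c 0 4) + (2) * x * (c 1 2) + (6) * x * y * (c 1 3) + (2) * x ^ 2 * (c 2 2) := by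
    rw [dW2]
    funext x y
    show deriv (fun t : ℝ => (-1) * A2 + (1) * (c 0 1) + (-2) * t * A5 + (2) * t * (c 0 2) + (-3) * t ^ 2 * A7 + (3) * t ^ 2 * (c 0 3) + (4) * t ^ 3 * (c 0 4) + (-1) * x * A4 + (1) * x * (c 1 1) + (2) * x * t * (c 1 2) + (3) * x * t ^ 2 * (c 1 3) + (1) * x ^ 2 * (c 2 1) + (2) * x ^ 2 * t * (c 2 2) + (1) * x ^ 3 * (c 3 1)) y = _
    rw [show (fun t : ℝ => (-1) * A2 + (1) * (c 0 1) + (-2) * t * A5 + (2) * t * (c 0 2) + (-3) * t ^ 2 * A7 + (3) * t ^ 2 * (c 0 3) + (4) * t ^ 3 * (c 0 4) + (-1) * x * A4 + (1) * x * (c 1 1) + (2) * x * t * (c 1 2) + (3) * x * t ^ 2 * (c 1 3) + (1) * x ^ 2 * (c 2 1) + (2) * x ^ 2 * t * (c 2 2) + (1) * x ^ 3 * (c 3 1)) = (fun t : ℝ => ((-1) * A2 + (1) * (c 0 1) + (-1) * x * A4 + (1) * x * (c 1 1) + (1) * x ^ 2 * (c 2 1) + (1) * x ^ 3 * (c 3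 1)) + ((-2) * A5 + (2) * (c 0 2) + (2) * x * (c 1 2) + (2) * x ^ 2 * (c 2 2)) * t + ((-3) * A7 + (3) * (c 0 3) + (3) * x * (c 1 3)) * t ^ 2 + ((4) * (c 0 4)) * t ^ 3 + (0) * t ^ 4) from funext fun t => by ring]
    rw [deriv_poly4]
    ring
  have du1 : pd1 u = fun x y => (1) * (c 1 0) + (1) * y * (c 1 1) + (1) * y ^ 2 * (c 1 2) + (1) * y ^ 3 * (c 1 3) + (2) * x * (c 2 0) + (2) * x * y * (c 2 1) + (2) * x * y ^ 2 * (c 2 2) + (3) * x ^ 2 * (c 3 0) + (3) * x ^ 2 * y * (c 3 1) + (4) * x ^ 3 * (c 4 0) := by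
    rw [hueq]
    funext x y
    show deriv (fun t : ℝ => (1) * (c 0 0) + (1) * y * (c 0 1) + (1) * y ^ 2 * (c 0 2) + (1) * y ^ 3 * (c 0 3) + (1) * y ^ 4 * (c 0 4) + (1) * t * (c 1 0) + (1) * t * y * (c 1 1) + (1) * t * y ^ 2 * (c 1 2) + (1) * t * y ^ 3 * (c 1 3) + (1) * t ^ 2 * (c 2 0) + (1) * t ^ 2 * y * (c 2 1) + (1) * t ^ 2 * y ^ 2 * (c 2 2) + (1) * t ^ 3 * (c 3 0) + (1) * t ^ 3 * y * (c 3 1) + (1) * t ^ 4 * (c 4 0)) x = _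
    rw [show (fun t : ℝ => (1) * (c 0 0) + (1) * y * (c 0 1) + (1) * y ^ 2 * (c 0 2) + (1) * y ^ 3 * (c 0 3) + (1) * y ^ 4 * (c 0 4) + (1) * t * (c 1 0) + (1) * t * y * (c 1 1) + (1) * t * y ^ 2 * (c 1 2) + (1) * t * y ^ 3 * (c 1 3) + (1) * t ^ 2 * (c 2 0) + (1) * t ^ 2 * y * (c 2 1) + (1) * t ^ 2 * y ^ 2 * (c 2 2) + (1) * t ^ 3 * (c 3 0) + (1) * t ^ 3 * y * (c 3 1) + (1) * t ^ 4 * (c 4 0)) = (fun t : ℝ => ((1) * (c 0 0) + (1) * y * (c 0 1) + (1) * y ^ 2 * (c 0 2) + (1) * y ^ 3 * (c 0 3) + (1) * y ^ 4 * (c 0 4)) + ((1) * (c 1 0) + (1) * y * (c 1 1) + (1) * y ^ 2 * (c 1 2) + (1) * y ^ 3 * (c 1 3)) * t + ((1) * (c 2 0) + (1) * y * (c 2 1) + (1) * y ^ 2 * (c 2 2)) * t ^ 2 + ((1) * (c 3 0) + (1) * y * (c 3 1)) * t ^ 3 + ((1) * (c 4 0)) * t ^ 4) from funext fun t => by ri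ng]
    rw [deriv_poly4]
    ring
  have du2 : pd2 u = fun x y => (1) * (c 0 1) + (2) * y * (c 0 2) + (3) * y ^ 2 * (c 0 3) + (4) * y ^ 3 * (c 0 4) + (1) * x * (c 1 1) + (2) * x * y * (c 1 2) + (3) * x * y ^ 2 * (c 1 3) + (1) * x ^ 2 * (c 2 1) + (2) * x ^ 2 * y * (c 2 2) + (1) * x ^ 3 * (c 3 1) := by
    rw [hueq]
    funext x y
    show deriv (fun t : ℝ => (1) * (c 0 0) + (1) * t * (c 0 1) + (1) * t ^ 2 * (c 0 2) + (1) * t ^ 3 * (c 0 3) + (1) * t ^ 4 * (c 0 4) + (1) * x * (c 1 0) + (1) * x * t * (c 1 1) + (1) * x * t ^ 2 * (c 1 2) + (1) * x * t ^ 3 * (c 1 3) + (1) * x ^ 2 * (c 2 0) + (1) * x ^ 2 * t * (c 2 1) + (1) * x ^ 2 * t ^ 2 * (c 2 2) + (1) * x ^ 3 * (c 3 0) + (1) * x ^ 3 * t * (c 3 1) + (1) * x ^ 4 * (c 4 0)) y = _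
    rw [show (fun t : ℝ => (1) * (c 0 0) + (1) * t * (c 0 1) + (1) * t ^ 2 * (c 0 2) + (1) * t ^ 3 * (c 0 3) + (1) * t ^ 4 * (c 0 4) + (1) * x * (c 1 0) + (1) * x * t * (c 1 1) + (1) * x * t ^ 2 * (c 1 2) + (1) * x * t ^ 3 * (c 1 3) + (1) * x ^ 2 * (c 2 0) + (1) * x ^ 2 * t * (c 2 1) + (1) * x ^ 2 * t ^ 2 * (c 2 2) + (1) * x ^ 3 * (c 3 0) + (1) * x ^ 3 * t * (c 3 1) + (1) * x ^ 4 * (c 4 0)) = (fun t : ℝ => ((1) * (c 0 0) + (1) * x * (c 1 0) + (1) * x ^ 2 * (c 2 0) + (1) * x ^ 3 * (c 3 0) + (1) * x ^ 4 * (c 4 0)) + ((1) * (c 0 1) + (1) * x * (c 1 1) + (1) * x ^ 2 * (c 2 1) + (1) * x ^ 3 * (c 3 1)) * t + ((1) * (c 0 2) + (1) * x * (c 1 2) + (1) * x ^ 2 * (c 2 2)) * t ^ 2 + ((1) * (c 0 3) + (1) * x * (c 1 3)) * t ^ 3 + ((1) * (c 0 4)) * t ^ 4) from funext fun t => by ri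ng]
    rw [deriv_poly4]
    ring
  have du11 : pd1 (pd1 u) = fun x y => (2) * (c 2 0) + (2) * y * (c 2 1) + (2) * y ^ 2 * (c 2 2) + (6) * x * (c 3 0) + (6) * x * y * (c 3 1) + (12) * x ^ 2 * (c 4 0) := by
    rw [du1]
    funext x y
    show deriv (fun t : ℝ => (1) * (c 1 0) + (1) * y * (c 1 1) + (1) * y ^ 2 * (c 1 2) + (1) * y ^ 3 * (c 1 3) + (2) * t * (c 2 0) + (2) * t * y * (c 2 1) + (2) * t * y ^ 2 * (c 2 2) + (3) * t ^ 2 * (c 3 0) + (3) * t ^ 2 * y * (c 3 1) + (4) * t ^ 3 * (c 4 0)) x = _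
    rw [show (fun t : ℝ => (1) * (c 1 0) + (1) * y * (c 1 1) + (1) * y ^ 2 * (c 1 2) + (1) * y ^ 3 * (c 1 3) + (2) * t * (c 2 0) + (2) * t * y * (c 2 1) + (2) * t * y ^ 2 * (c 2 2) + (3) * t ^ 2 * (c 3 0) + (3) * t ^ 2 * y * (c 3 1) + (4) * t ^ 3 * (c 4 0)) = (fun t : ℝ => ((1) * (c 1 0) + (1) * y * (c 1 1) + (1) * y ^ 2 * (c 1 2) + (1) * y ^ 3 * (c 1 3)) + ((2) * (c 2 0) + (2) * y * (c 2 1) + (2) * y ^ 2 * (c 2 2)) * t + ((3) * (c 3 0) + (3) * y * (c 3 1)) * t ^ 2 + ((4) * (c 4 0)) * t ^ 3 + (0) * t ^ 4) from funext fun t => by ring]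
    rw [deriv_poly4]
    ring
  have du22 : pd2 (pd2 u) = fun x y => (2) * (c 0 2) + (6) * y * (c 0 3) + (12) * y ^ 2 * (c 0 4) + (2) * x * (c 1 2) + (6) * x * y * (c 1 3) + (2) * x ^ 2 * (c 2 2) := by
    rw [du2]
    funext x y
    show deriv (fun t : ℝ => (1) * (c 0 1) + (2) * t * (c 0 2) + (3) * t ^ 2 * (c 0 3) + (4) * t ^ 3 * (c 0 4) + (1) * x * (c 1 1) + (2) * x * t * (c 1 2) + (3) * x * t ^ 2 * (c 1 3) + (1) * x ^ 2 * (c 2 1) + (2) * x ^ 2 * t * (c 2 2) + (1) * x ^ 3 * (c 3 1)) y = _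
    rw [show (fun t : ℝ => (1) * (c 0 1) + (2) * t * (c 0 2) + (3) * t ^ 2 * (c 0 3) + (4) * t ^ 3 * (c 0 4) + (1) * x * (c 1 1) + (2) * x * t * (c 1 2) + (3) * x * t ^ 2 * (c 1 3) + (1) * x ^ 2 * (c 2 1) + (2) * x ^ 2 * t * (c 2 2) + (1) * x ^ 3 * (c 3 1)) = (fun t : ℝ => ((1) * (c 0 1) + (1) * x * (c 1 1) + (1) * x ^ 2 * (c 2 1) + (1) * x ^ 3 * (c 3 1)) + ((2) * (c 0 2) + (2) * x * (c 1 2) + (2) * x ^ 2 * (c 2 2)) * t + ((3) * (c 0 3) + (3) * x * (c 1 3)) * t ^ 2 + ((4) * (c 0 4)) * t ^ 3 + (0) * t ^ 4) from funext fun t => by ring]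
    rw [deriv_poly4]
    ring
  have du112 : pd2 (pd1 (pd1 u)) = fun x y => (2) * (c 2 1) + (4) * y * (c 2 2) + (6) * x * (c 3 1) := by
    rw [du11]
    funext x y
    show deriv (fun t : ℝ => (2) * (c 2 0) + (2) * t * (c 2 1) + (2) * t ^ 2 * (c 2 2) + (6) * x * (c 3 0) + (6) * x * t * (c 3 1) + (12) * x ^ 2 * (c 4 0)) y = _
    rw [show (fun t : ℝ => (2) * (c 2 0) + (2) * t * (c 2 1) + (2) * t ^ 2 * (c 2 2) + (6) * x * (c 3 0) + (6) * x * t * (c 3 1) + (12) * x ^ 2 * (c 4 0)) = (fun t : ℝ => ((2) * (c 2 0) + (6) * x * (c 3 0) + (12) * x ^ 2 * (c 4 0)) + ((2) * (c 2 1) + (6) * x * (c 3 1)) * t + ((2) * (c 2 2)) * t ^ 2 + (0) * t ^ 3 + (0) * t ^ 4) from funext fun t => by ring]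
    rw [deriv_poly4]
    ring
  have du221 : pd1 (pd2 (pd2 u)) = fun x y => (2) * (c 1 2) + (6) * y * (c 1 3) + (4) * x * (c 2 2) := by
    rw [du22]
    funext x y
    show deriv (fun t : ℝ => (2) * (c 0 2) + (6) * y * (c 0 3) + (12) * y ^ 2 * (c 0 4) + (2) * t * (c 1 2) + (6) * t * y * (c 1 3) + (2) * t ^ 2 * (c 2 2)) x = _
    rw [show (fun t : ℝ => (2) * (c 0 2) + (6) * y * (c 0 3) + (12) * y ^ 2 * (c 0 4) + (2) * t * (c 1 2) + (6) * t * y * (c 1 3) + (2) * t ^ 2 * (c 2 2)) = (fun t : ℝ => ((2) * (c 0 2) + (6) * y * (c 0 3) + (12) * y ^ 2 * (c 0 4)) + ((2) * (c 1 2) + (6) * y * (c 1 3)) * t + ((2) * (c 2 2)) * t ^ 2 + (0) * t ^ 3 + (0) * t ^ 4) from funext fun t => by ring]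
    rw [deriv_poly4]
    ring
  have dP1 : pd1 Pu = fun x y => (1) * A1 + (1) * y * A4 + (2) * x * A3 + (3) * x ^ 2 * A6 := by
    rw [hPueq]
    funext x y
    show deriv (fun t : ℝ => (1) * A0 + (1) * y * A2 + (1) * y ^ 2 * A5 + (1) * y ^ 3 * A7 + (1) * t * A1 + (1) * t * y * A4 + (1) * t ^ 2 * A3 + (1) * t ^ 3 * A6) x = _
    rw [show (fun t : ℝ => (1) * A0 + (1) * y * A2 + (1) * y ^ 2 * A5 + (1) * y ^ 3 * A7 + (1) * t * A1 + (1) * t * y * A4 + (1) * t ^ 2 * A3 + (1) * t ^ 3 * A6) = (fun t : ℝ => ((1) * A0 + (1) * y * A2 + (1) * y ^ 2 * A5 + (1) * y ^ 3 * A7) + ((1) * A1 + (1) * y * A4) * t + ((1) * A3) * t ^ 2 + ((1) * A6) * t ^ 3 + (0) * t ^ 4) from funext fun t => by ring]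
    rw [deriv_poly4]
    ring
  have dP2 : pd2 Pu = fun x y => (1) * A2 + (2) * y * A5 + (3) * y ^ 2 * A7 + (1) * x * A4 := by
    rw [hPueq]
    funext x y
    show deriv (fun t : ℝ => (1) * A0 + (1) * t * A2 + (1) * t ^ 2 * A5 + (1) * t ^ 3 * A7 + (1) * x * A1 + (1) * x * t * A4 + (1) * x ^ 2 * A3 + (1) * x ^ 3 * A6) y = _
    rw [show (fun t : ℝ => (1) * A0 + (1) * t * A2 + (1) * t ^ 2 * A5 + (1) * t ^ 3 * A7 + (1) * x * A1 + (1) * x * t * A4 + (1) * x ^ 2 * A3 + (1) * x ^ 3 * A6) = (fun t : ℝ => ((1) * A0 + (1) * x * A1 + (1) * x ^ 2 * A3 + (1) * x ^ 3 * A6) + ((1) * A2 + (1) * x * A4) * t + ((1) * A5) * t ^ 2 + ((1) * A7) * t ^ 3 + (0) * t ^ 4) from funext fun t => by ring]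
    rw [deriv_poly4]
    ring
  have dv1 : pd1 v = fun x y => (1) * B1 + (1) * y * B4 + (2) * x * B3 + (3) * x ^ 2 * B6 := by
    rw [hveq]
    funext x y
    show deriv (fun t : ℝ => (1) * B0 + (1) * y * B2 + (1) * y ^ 2 * B5 + (1) * y ^ 3 * B7 + (1) * t * B1 + (1) * t * y * B4 + (1) * t ^ 2 * B3 + (1) * t ^ 3 * B6) x = _
    rw [show (fun t : ℝ => (1) * B0 + (1) * y * B2 + (1) * y ^ 2 * B5 + (1) * y ^ 3 * B7 + (1) * t * B1 + (1) * t * y * B4 + (1) * t ^ 2 * B3 + (1) * t ^ 3 * B6) = (fun t : ℝ => ((1) * B0 + (1) * y * B2 + (1) * y ^ 2 * B5 + (1) * y ^ 3 * B7) + ((1) * B1 + (1) * y * B4) * t + ((1) * B3) * t ^ 2 + ((1) * B6) * t ^ 3 + (0) * t ^ 4) from funext fun t => by ring]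
    rw [deriv_poly4]
    ring
  have dv2 : pd2 v = fun x y => (1) * B2 + (2) * y * B5 + (3) * y ^ 2 * B7 + (1) * x * B4 := by
    rw [hveq]
    funext x y
    show deriv (fun t : ℝ => (1) * B0 + (1) * t * B2 + (1) * t ^ 2 * B5 + (1) * t ^ 3 * B7 + (1) * x * B1 + (1) * x * t * B4 + (1) * x ^ 2 * B3 + (1) * x ^ 3 * B6) y = _
    rw [show (fun t : ℝ => (1) * B0 + (1) * t * B2 + (1) * t ^ 2 * B5 + (1) * t ^ 3 * B7 + (1) * x * B1 + (1) * x * t * B4 + (1) * x ^ 2 * B3 + (1) * x ^ 3 * B6) = (fun t : ℝ => ((1) * B0 + (1) * x * B1 + (1) * x ^ 2 * B3 + (1) * x ^ 3 * B6) + ((1) * B2 + (1) * x * B4) * t + ((1) * B5) * t ^ 2 + ((1) * B7) * t ^ 3 + (0) * t ^ 4) from funext fun t => by ring]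
    rw [deriv_poly4]
    ring
  have dv11 : pd1 (pd1 v) = fun x y => (2) * B3 + (6) * x * B6 := by
    rw [dv1]
    funext x y
    show deriv (fun t : ℝ => (1) * B1 + (1) * y * B4 + (2) * t * B3 + (3) * t ^ 2 * B6) x = _
    rw [show (fun t : ℝ => (1) * B1 + (1) * y * B4 + (2) * t * B3 + (3) * t ^ 2 * B6) = (fun t : ℝ => ((1) * B1 + (1) * y * B4) + ((2) * B3) * t + ((3) * B6) * t ^ 2 + (0) * t ^ 3 + (0) * t ^ 4) from funext fun t => by ring]
    rw [deriv_poly4]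
    ring
  have dv12 : pd2 (pd1 v) = fun x y => (1) * B4 := by
    rw [dv1]
    funext x y
    show deriv (fun t : ℝ => (1) * B1 + (1) * t * B4 + (2) * x * B3 + (3) * x ^ 2 * B6) y = _
    rw [show (fun t : ℝ => (1) * B1 + (1) * t * B4 + (2) * x * B3 + (3) * x ^ 2 * B6) = (fun t : ℝ => ((1) * B1 + (2) * x * B3 + (3) * x ^ 2 * B6) + ((1) * B4) * t + (0) * t ^ 2 + (0) * t ^ 3 + (0) * t ^ 4) from funext fun t => by ring]
    rw [deriv_poly4]
    ring
  have dv21 : pd1 (pd2 v) = fun x y => (1) * B4 := by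
    rw [dv2]
    funext x y
    show deriv (fun t : ℝ => (1) * B2 + (2) * y * B5 + (3) * y ^ 2 * B7 + (1) * t * B4) x = _
    rw [show (fun t : ℝ => (1) * B2 + (2) * y * B5 + (3) * y ^ 2 * B7 + (1) * t * B4) = (fun t : ℝ => ((1) * B2 + (2) * y * B5 + (3) * y ^ 2 * B7) + ((1) * B4) * t + (0) * t ^ 2 + (0) * t ^ 3 + (0) * t ^ 4) from funext fun t => by ring]
    rw [deriv_poly4]
    ring
  have dv22 : pd2 (pd2 v) = fun x y => (2) * B5 + (6) * y * B7 := by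
    rw [dv2]
    funext x y
    show deriv (fun t : ℝ => (1) * B2 + (2) * t * B5 + (3) * t ^ 2 * B7 + (1) * x * B4) y = _
    rw [show (fun t : ℝ => (1) * B2 + (2) * t * B5 + (3) * t ^ 2 * B7 + (1) * x * B4) = (fun t : ℝ => ((1) * B2 + (1) * x * B4) + ((2) * B5) * t + ((3) * B7) * t ^ 2 + (0) * t ^ 3 + (0) * t ^ 4) from funext fun t => by ring]
    rw [deriv_poly4]
    ring
  have dv111 : pd1 (pd1 (pd1 v)) = fun x y => (6) * B6 := by
    rw [dv11]
    funext x y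
    show deriv (fun t : ℝ => (2) * B3 + (6) * t * B6) x = _
    rw [show (fun t : ℝ => (2) * B3 + (6) * t * B6) = (fun t : ℝ => ((2) * B3) + ((6) * B6) * t + (0) * t ^ 2 + (0) * t ^ 3 + (0) * t ^ 4) from funext fun t => by ring]
    rw [deriv_poly4]
    ring
  have dv222 : pd2 (pd2 (pd2 v)) = fun x y => (6) * B7 := by
    rw [dv22]
    funext x y
    show deriv (fun t : ℝ => (2) * B5 + (6) * t * B7) y = _
    rw [show (fun t : ℝ => (2) * B5 + (6) * t * B7) = (fun t : ℝ => ((2) * B5) + ((6) * B7) * t + (0) * t ^ 2 + (0) * t ^ 3 + (0) * t ^ 4) from funext fun t => by ring]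
    rw [deriv_poly4]
    ring
  have hL : (∫ x in Icc (x₁c - h) (x₁c + h), ∫ y in Icc (x₂c - h) (x₂c + h),
      (pd1 (pd1 (fun s t => u s t - Pu s t)) x y * pd1 (pd1 v) x y
        + pd2 (pd1 (fun s t => u s t - Pu s t)) x y * pd2 (pd1 v) x y
        + pd1 (pd2 (fun s t => u s t - Pu s t)) x y * pd1 (pd2 v) x y
        + pd2 (pd2 (fun s t => u s t - Pu s t)) x y * pd2 (pd2 v) x y)) = (-16) * h ^ 2 * A5 * B5 + (-8) * h ^ 2 * A4 * B4 + (-16) * h ^ 2 * A3 * B3 + (16) * h ^ 2 * (c 2 0) * B3 + (8) * h ^ 2 * (c 1 1) * B4 + (16) * h ^ 2 * (c 0 2) * B5 + (-48) * h ^ 2 * x₂c * A7 * B5 + (-48) * h ^ 2 * x₂c * A5 * B7 + (16) * h ^ 2 * x₂c * (c 2 1) * B3 + (16) * h ^ 2 * x₂c * (c 1 2) * B4 + (48) * h ^ 2 * x₂c * (c 0 3) * B5 + (48) * h ^ 2 * x₂c * (c 0 2) * B7 + (-144) * h ^ 2 * x₂c ^ 2 * A7 * B7 + (16) * h ^ 2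 * x₂c ^ 2 * (c 2 2) * B3 + (24) * h ^ 2 * x₂c ^ 2 * (c 1 3) * B4 + (96) * h ^ 2 * x₂c ^ 2 * (c 0 4) * B5 + (144) * h ^ 2 * x₂c ^ 2 * (c 0 3) * B7 + (288) * h ^ 2 * x₂c ^ 3 * (c 0 4) * B7 + (-48) * h ^ 2 * x₁c * A6 * B3 + (-48) * h ^ 2 * x₁c * A3 * B6 + (48) * h ^ 2 * x₁c * (c 3 0) * B3 + (16) * h ^ 2 * x₁c * (c 2 1) * B4 + (48) * h ^ 2 * x₁c * (c 2 0) * B6 + (16) * h ^ 2 * x₁c * (c 1 2) * B5 + (48) * h ^ 2 * x₁c * x₂c * (c 3 1) * B3 + (32) * h ^ 2 * x₁c * x₂c * (c 2 2) * B4 + (48) * h ^ 2 * x₁c * x₂c * (c 2 1) * B6 + (48) * h ^ 2 * x₁c * x₂c * (c 1 3) * B5 + (48) * h ^ 2 * x₁c * x₂c * (c 1 2) * B7 + (48) * h ^ 2 * x₁c * x₂c ^ 2 * (c 2 2) * B6 + (144) * h ^ 2 * x₁c * x₂c ^ 2 * (c 1 3) * B7 + (-144) * h ^ 2 * x₁c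 ^ 2 * A6 * B6 + (96) * h ^ 2 * x₁c ^ 2 * (c 4 0) * B3 + (24) * h ^ 2 * x₁c ^ 2 * (c 3 1) * B4 + (144) * h ^ 2 * x₁c ^ 2 * (c 3 0) * B6 + (16) * h ^ 2 * x₁c ^ 2 * (c 2 2) * B5 + (144) * h ^ 2 * x₁c ^ 2 * x₂c * (c 3 1) * B6 + (48) * h ^ 2 * x₁c ^ 2 * x₂c * (c 2 2) * B7 + (288) * h ^ 2 * x₁c ^ 3 * (c 4 0) * B6 + (-48) * h ^ 4 * A7 * B7 + (-48) * h ^ 4 * A6 * B6 + (32) * h ^ 4 * (c 4 0) * B3 + (8) * h ^ 4 * (c 3 1) * B4 + (48) * h ^ 4 * (c 3 0) * B6 + (16/3) * h ^ 4 * (c 2 2) * B5 + (16/3) * h ^ 4 * (c 2 2) * B3 + (8) * h ^ 4 * (c 1 3) * B4 + (32) * h ^ 4 * (c 0 4) * B5 + (48) * h ^ 4 * (c 0 3) * B7 + (48) * h ^ 4 * x₂c * (c 3 1) * B6 + (16) * h ^ 4 * x₂c * (c 2 2) * B7 + (288) * h ^ 4 * x₂c * (c 0 4) * B7 + (288) *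 h ^ 4 * x₁c * (c 4 0) * B6 + (16) * h ^ 4 * x₁c * (c 2 2) * B6 + (48) * h ^ 4 * x₁c * (c 1 3) * B7 := by
    refine inner_eval hle1 _ ((-8) * h * A5 * B5 + (-4) * h * A4 * B4 + (-8) * h * A3 * B3 + (8) * h * (c 2 0) * B3 + (4) * h * (c 1 1) * B4 + (8) * h * (c 0 2) * B5 + (-24) * h * x₂c * A7 * B5 + (-24) * h * x₂c * A5 * B7 + (8) * h * x₂c * (c 2 1) * B3 + (8) * h * x₂c * (c 1 2) * B4 + (24) * h * x₂c * (c 0 3) * B5 + (24) * h * x₂c * (c 0 2) * B7 + (-72) * h * x₂c ^ 2 * A7 * B7 + (8) * h * x₂c ^ 2 * (c 2 2) * B3 + (12) * h * x₂c ^ 2 * (c 1 3) * B4 + (48) * h * x₂c ^ 2 * (c 0 4) * B5 + (72) * h * x₂c ^ 2 * (c 0 3) * B7 + (144) * h * x₂c ^ 3 * (c 0 4) * B7 + (-24) * h ^ 3 * A7 * B7 + (8/3) * h ^ 3 * (c 2 2) * B3 + (4) * h ^ 3 * (c 1 3) * B4 + (16) * h ^ 3 * (c 0 4) * B5 + (24)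 * h ^ 3 * (c 0 3) * B7 + (144) * h ^ 3 * x₂c * (c 0 4) * B7) ((-24) * h * A6 * B3 + (-24) * h * A3 * B6 + (24) * h * (c 3 0) * B3 + (8) * h * (c 2 1) * B4 + (24) * h * (c 2 0) * B6 + (8) * h * (c 1 2) * B5 + (24) * h * x₂c * (c 3 1) * B3 + (16) * h * x₂c * (c 2 2) * B4 + (24) * h * x₂c * (c 2 1) * B6 + (24) * h * x₂c * (c 1 3) * B5 + (24) * h * x₂c * (c 1 2) * B7 + (24) * h * x₂c ^ 2 * (c 2 2) * B6 + (72) * h * x₂c ^ 2 * (c 1 3) * B7 + (8) * h ^ 3 * (c 2 2) * B6 + (24) * h ^ 3 * (c 1 3) * B7) ((-72) * h * A6 * B6 + (48) * h * (c 4 0) * B3 + (12) * h * (c 3 1) * B4 + (72) * h * (c 3 0) * B6 + (8) * h * (c 2 2) * B5 + (72) * h * x₂c * (c 3 1) * B6 + (24) * h * x₂c * (c 2 2) * B7) ((144) * h * (c 4 0) * B6) (0) _ (fun x => ?_) (by ring)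
    refine inner_eval hle2 _ ((-4) * A5 * B5 + (-2) * A4 * B4 + (-4) * A3 * B3 + (4) * (c 2 0) * B3 + (2) * (c 1 1) * B4 + (4) * (c 0 2) * B5 + (-12) * x * A6 * B3 + (-12) * x * A3 * B6 + (12) * x * (c 3 0) * B3 + (4) * x * (c 2 1) * B4 + (12) * x * (c 2 0) * B6 + (4) * x * (c 1 2) * B5 + (-36) * x ^ 2 * A6 * B6 + (24) * x ^ 2 * (c 4 0) * B3 + (6) * x ^ 2 * (c 3 1) * B4 + (36) * x ^ 2 * (c 3 0) * B6 + (4) * x ^ 2 * (c 2 2) * B5 + (72) * x ^ 3 * (c 4 0) * B6) ((-12) * A7 * B5 + (-12) * A5 * B7 + (4) * (c 2 1) * B3 + (4) * (c 1 2) * B4 + (12) * (c 0 3) * B5 + (12) * (c 0 2) * B7 + (12) * x * (c 3 1) * B3 + (8) * x * (c 2 2) * B4 + (12) * x * (c 2 1) * B6 + (12) * x * (c 1 3) * B5 + (12) * x * (c 1 2) * B7 + (36) * x ^ 2 * (c 3 1) * B6 + (12) * x ^ 2 * (c 2 2) * B7) ((-36) * A7 * B7 + (4) * (c 2 2) * B3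 + (6) * (c 1 3) * B4 + (24) * (c 0 4) * B5 + (36) * (c 0 3) * B7 + (12) * x * (c 2 2) * B6 + (36) * x * (c 1 3) * B7) ((72) * (c 0 4) * B7) (0) _ (fun y => ?_) (by ring)
    simp only [dW11, dW12, dW21, dW22, dv11, dv12, dv21, dv22]
    ring
  have hR1 : (∫ x in Icc (x₁c - h) (x₁c + h), ∫ y in Icc (x₂c - h) (x₂c + h),
      pd1 (pd2 (pd2 u)) x y * pd1 (pd1 (pd1 v)) x y) = (48) * h ^ 2 * (c 1 2) * B6 + (144) * h ^ 2 * x₂c * (c 1 3) * B6 + (96) * h ^ 2 * x₁c * (c 2 2) * B6 := by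
    refine inner_eval hle1 _ ((24) * h * (c 1 2) * B6 + (72) * h * x₂c * (c 1 3) * B6) ((48) * h * (c 2 2) * B6) (0) (0) (0) _ (fun x => ?_) (by ring)
    refine inner_eval hle2 _ ((12) * (c 1 2) * B6 + (24) * x * (c 2 2) * B6) ((36) * (c 1 3) * B6) (0) (0) (0) _ (fun y => ?_) (by ring)
    simp only [du221, dv111]
    ring
  have hR2 : (∫ x in Icc (x₁c - h) (x₁c + h), ∫ y in Icc (x₂c - h) (x₂c + h),
      pd2 (pd1 (pd1 u)) x y * pd2 (pd2 (pd2 v)) x y) = (48) * h ^ 2 * (c 2 1) * B7 + (96) * h ^ 2 * x₂c * (c 2 2) * B7 + (144) * h ^ 2 * x₁c * (c 3 1) * B7 := by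
    refine inner_eval hle1 _ ((24) * h * (c 2 1) * B7 + (48) * h * x₂c * (c 2 2) * B7) ((72) * h * (c 3 1) * B7) (0) (0) (0) _ (fun x => ?_) (by ring)
    refine inner_eval hle2 _ ((12) * (c 2 1) * B7 + (36) * x * (c 3 1) * B7) ((24) * (c 2 2) * B7) (0) (0) (0) _ (fun y => ?_) (by ring)
    simp only [du112, dv222]
    ring
  have hVmm : (1) * A0 + (1) * (x₂c - h) * A2 + (1) * (x₂c - h) ^ 2 * A5 + (1) * (x₂c - h) ^ 3 * A7 + (1) * (x₁c - h) * A1 + (1) * (x₁c - h) * (x₂c - h) * A4 + (1) * (x₁c - h) ^ 2 * A3 + (1) * (x₁c - h) ^ 3 * A6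
      = (1) * (c 0 0) + (1) * (x₂c - h) * (c 0 1) + (1) * (x₂c - h) ^ 2 * (c 0 2) + (1) * (x₂c - h) ^ 3 * (c 0 3) + (1) * (x₂c - h) ^ 4 * (c 0 4) + (1) * (x₁c - h) * (c 1 0) + (1) * (x₁c - h) * (x₂c - h) * (c 1 1) + (1) * (x₁c - h) * (x₂c - h) ^ 2 * (c 1 2) + (1) * (x₁c - h) * (x₂c - h) ^ 3 * (c 1 3) + (1) * (x₁c - h) ^ 2 * (c 2 0) + (1) * (x₁c - h) ^ 2 * (x₂c - h) * (c 2 1) + (1) * (x₁c - h) ^ 2 * (x₂c - h) ^ 2 * (c 2 2) + (1) * (x₁c - h) ^ 3 * (c 3 0) + (1) * (x₁c - h) ^ 3 * (x₂c - h) * (c 3 1) + (1) * (x₁c - h) ^ 4 * (c 4 0) := by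
    have htmp := hvtx (x₁c - h) (by simp) (x₂c - h) (by simp)
    rw [hueq, hPueq] at htmp
    exact htmp
  have hVmp : (1) * A0 + (1) * (x₂c + h) * A2 + (1) * (x₂c + h) ^ 2 * A5 + (1) * (x₂c + h) ^ 3 * A7 + (1) * (x₁c - h) * A1 + (1) * (x₁c - h) * (x₂c + h) * A4 + (1) * (x₁c - h) ^ 2 * A3 + (1) * (x₁c - h) ^ 3 * A6
      = (1) * (c 0 0) + (1) * (x₂c + h) * (c 0 1) + (1) * (x₂c + h) ^ 2 * (c 0 2) + (1) * (x₂c + h) ^ 3 * (c 0 3) + (1) * (x₂c + h) ^ 4 * (c 0 4) + (1) * (x₁c - h) * (c 1 0) + (1) * (x₁c - h) * (x₂c + h) * (c 1 1) + (1) * (x₁c - h) * (x₂c + h) ^ 2 * (c 1 2) + (1) * (x₁c - h) * (x₂c + h) ^ 3 * (c 1 3) + (1) * (x₁c - h) ^ 2 * (c 2 0) + (1) * (x₁c - h) ^ 2 * (x₂c + h) * (c 2 1) + (1) * (x₁c - h) ^ 2 * (x₂c + h) ^ 2 * (c 2 2) + (1) * (x₁c - h) ^ 3 * (c 3 0) +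 (1) * (x₁c - h) ^ 3 * (x₂c + h) * (c 3 1) + (1) * (x₁c - h) ^ 4 * (c 4 0) := by
    have htmp := hvtx (x₁c - h) (by simp) (x₂c + h) (by simp)
    rw [hueq, hPueq] at htmp
    exact htmp
  have hVpm : (1) * A0 + (1) * (x₂c - h) * A2 + (1) * (x₂c - h) ^ 2 * A5 + (1) * (x₂c - h) ^ 3 * A7 + (1) * (x₁c + h) * A1 + (1) * (x₁c + h) * (x₂c - h) * A4 + (1) * (x₁c + h) ^ 2 * A3 + (1) * (x₁c + h) ^ 3 * A6
      = (1) * (c 0 0) + (1) * (x₂c - h) * (c 0 1) + (1) * (x₂c - h) ^ 2 * (c 0 2) + (1) * (x₂c - h) ^ 3 * (c 0 3) + (1) * (x₂c - h) ^ 4 * (c 0 4) + (1) * (x₁c + h) * (c 1 0) + (1) * (x₁c + h) * (x₂c - h) * (c 1 1) + (1) * (x₁c + h) * (x₂c - h) ^ 2 * (c 1 2) + (1) * (x₁c + h) * (x₂c - h) ^ 3 * (c 1 3) + (1) * (x₁c + h) ^ 2 * (c 2 0) + (1) * (x₁c + h) ^ 2 * (x₂c - h) * (c 2 1) + (1) *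 (x₁c + h) ^ 2 * (x₂c - h) ^ 2 * (c 2 2) + (1) * (x₁c + h) ^ 3 * (c 3 0) + (1) * (x₁c + h) ^ 3 * (x₂c - h) * (c 3 1) + (1) * (x₁c + h) ^ 4 * (c 4 0) := by
    have htmp := hvtx (x₁c + h) (by simp) (x₂c - h) (by simp)
    rw [hueq, hPueq] at htmp
    exact htmp
  have hVpp : (1) * A0 + (1) * (x₂c + h) * A2 + (1) * (x₂c + h) ^ 2 * A5 + (1) * (x₂c + h) ^ 3 * A7 + (1) * (x₁c + h) * A1 + (1) * (x₁c + h) * (x₂c + h) * A4 + (1) * (x₁c + h) ^ 2 * A3 + (1) * (x₁c + h) ^ 3 * A6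
      = (1) * (c 0 0) + (1) * (x₂c + h) * (c 0 1) + (1) * (x₂c + h) ^ 2 * (c 0 2) + (1) * (x₂c + h) ^ 3 * (c 0 3) + (1) * (x₂c + h) ^ 4 * (c 0 4) + (1) * (x₁c + h) * (c 1 0) + (1) * (x₁c + h) * (x₂c + h) * (c 1 1) + (1) * (x₁c + h) * (x₂c + h) ^ 2 * (c 1 2) + (1) * (x₁c + h) * (x₂c + h) ^ 3 * (c 1 3) + (1) * (x₁c + h) ^ 2 * (c 2 0) + (1) * (x₁c + h) ^ 2 * (x₂c + h) * (c 2 1) + (1) * (x₁c + h) ^ 2 * (x₂c + h) ^ 2 * (c 2 2) + (1) * (x₁c + h) ^ 3 * (c 3 0) + (1) * (x₁c + h) ^ 3 * (x₂c + h) * (c 3 1) + (1) * (x₁c + h) ^ 4 * (c 4 0) := by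
    have htmp := hvtx (x₁c + h) (by simp) (x₂c + h) (by simp)
    rw [hueq, hPueq] at htmp
    exact htmp
  have hIP1m : (∫ t in Icc (x₂c - h) (x₂c + h), pd1 Pu (x₁c - h) t) = (2) * h * A1 + (2) * h * x₂c * A4 + (4) * h * x₁c * A3 + (6) * h * x₁c ^ 2 * A6 + (-4) * h ^ 2 * A3 + (-12) * h ^ 2 * x₁c * A6 + (6) * h ^ 3 * A6 := by
    refine inner_eval hle2 _ ((1) * A1 + (2) * x₁c * A3 + (3) * x₁c ^ 2 * A6 + (-2) * h * A3 + (-6) * h * x₁c * A6 + (3) * h ^ 2 * A6) ((1) * A4) (0) (0) (0) _ (fun t => ?_) (by ring)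
    simp only [dP1, dP2, du1, du2]
    ring
  have hIU1m : (∫ t in Icc (x₂c - h) (x₂c + h), pd1 u (x₁c - h) t) = (2) * h * (c 1 0) + (2) * h * x₂c * (c 1 1) + (2) * h * x₂c ^ 2 * (c 1 2) + (2) * h * x₂c ^ 3 * (c 1 3) + (4) * h * x₁c * (c 2 0) + (4) * h * x₁c * x₂c * (c 2 1) + (4) * h * x₁c * x₂c ^ 2 * (c 2 2) + (6) * h * x₁c ^ 2 * (c 3 0) + (6) * h * x₁c ^ 2 * x₂c * (c 3 1) + (8) * h * x₁c ^ 3 * (c 4 0) + (-4) * h ^ 2 * (c 2 0) + (-4) * h ^ 2 * x₂c * (c 2 1) + (-4) * h ^ 2 * x₂c ^ 2 * (c 2 2) + (-12) * h ^ 2 * x₁c * (c 3 0) + (-12) * h ^ 2 * x₁c * x₂c * (c 3 1) + (-24) * h ^ 2 * x₁c ^ 2 * (c 4 0) + (6) * h ^ 3 * (c 3 0) + (2/3) * h ^ 3 * (c 1 2) + (6) * h ^ 3 * x₂c * (c 3 1) + (2) * h ^ 3 * x₂c * (c 1 3) + (24) * h ^ 3 * x₁c * (c 4 0) + (4/3)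 * h ^ 3 * x₁c * (c 2 2) + (-8) * h ^ 4 * (c 4 0) + (-4/3) * h ^ 4 * (c 2 2) := by
    refine inner_eval hle2 _ ((1) * (c 1 0) + (2) * x₁c * (c 2 0) + (3) * x₁c ^ 2 * (c 3 0) + (4) * x₁c ^ 3 * (c 4 0) + (-2) * h * (c 2 0) + (-6) * h * x₁c * (c 3 0) + (-12) * h * x₁c ^ 2 * (c 4 0) + (3) * h ^ 2 * (c 3 0) + (12) * h ^ 2 * x₁c * (c 4 0) + (-4) * h ^ 3 * (c 4 0)) ((1) * (c 1 1) + (2) * x₁c * (c 2 1) + (3) * x₁c ^ 2 * (c 3 1) + (-2) * h * (c 2 1) + (-6) * h * x₁c * (c 3 1) + (3) * h ^ 2 * (c 3 1)) ((1) * (c 1 2) + (2) * x₁c * (c 2 2) + (-2) * h * (c 2 2)) ((1) * (c 1 3)) (0) _ (fun t => ?_) (by ring)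
    simp only [dP1, dP2, du1, du2]
    ring
  have hE1m := hedge1 (x₁c - h) (by simp)
  rw [hIP1m, hIU1m] at hE1m
  have hIP1p : (∫ t in Icc (x₂c - h) (x₂c + h), pd1 Pu (x₁c + h) t) = (2) * h * A1 + (2) * h * x₂c * A4 + (4) * h * x₁c * A3 + (6) * h * x₁c ^ 2 * A6 + (4) * h ^ 2 * A3 + (12) * h ^ 2 * x₁c * A6 + (6) * h ^ 3 * A6 := by
    refine inner_eval hle2 _ ((1) * A1 + (2) * x₁c * A3 + (3) * x₁c ^ 2 * A6 + (2) * h * A3 + (6) * h * x₁c * A6 + (3) * h ^ 2 * A6) ((1) * A4) (0) (0) (0) _ (fun t => ?_) (by ring)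
    simp only [dP1, dP2, du1, du2]
    ring
  have hIU1p : (∫ t in Icc (x₂c - h) (x₂c + h), pd1 u (x₁c + h) t) = (2) * h * (c 1 0) + (2) * h * x₂c * (c 1 1) + (2) * h * x₂c ^ 2 * (c 1 2) + (2) * h * x₂c ^ 3 * (c 1 3) + (4) * h * x₁c * (c 2 0) + (4) * h * x₁c * x₂c * (c 2 1) + (4) * h * x₁c * x₂c ^ 2 * (c 2 2) + (6) * h * x₁c ^ 2 * (c 3 0) + (6) * h * x₁c ^ 2 * x₂c * (c 3 1) + (8) * h * x₁c ^ 3 * (c 4 0) + (4) * h ^ 2 * (c 2 0) + (4) * h ^ 2 * x₂c * (c 2 1) + (4) * h ^ 2 * x₂c ^ 2 * (c 2 2) + (12) * h ^ 2 * x₁c * (c 3 0) + (12) * h ^ 2 * x₁c * x₂c * (c 3 1) + (24) * h ^ 2 * x₁c ^ 2 * (c 4 0) + (6) * h ^ 3 * (c 3 0) + (2/3) * h ^ 3 * (c 1 2) + (6) * h ^ 3 * x₂c * (c 3 1) + (2) * h ^ 3 * x₂c * (c 1 3) + (24) * h ^ 3 * x₁c * (c 4 0) + (4/3) * h ^ 3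 * x₁c * (c 2 2) + (8) * h ^ 4 * (c 4 0) + (4/3) * h ^ 4 * (c 2 2) := by
    refine inner_eval hle2 _ ((1) * (c 1 0) + (2) * x₁c * (c 2 0) + (3) * x₁c ^ 2 * (c 3 0) + (4) * x₁c ^ 3 * (c 4 0) + (2) * h * (c 2 0) + (6) * h * x₁c * (c 3 0) + (12) * h * x₁c ^ 2 * (c 4 0) + (3) * h ^ 2 * (c 3 0) + (12) * h ^ 2 * x₁c * (c 4 0) + (4) * h ^ 3 * (c 4 0)) ((1) * (c 1 1) + (2) * x₁c * (c 2 1) + (3) * x₁c ^ 2 * (c 3 1) + (2) * h * (c 2 1) + (6) * h * x₁c * (c 3 1) + (3) * h ^ 2 * (c 3 1)) ((1) * (c 1 2) + (2) * x₁c * (c 2 2) + (2) * h * (c 2 2)) ((1) * (c 1 3)) (0) _ (fun t => ?_) (by ring)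
    simp only [dP1, dP2, du1, du2]
    ring
  have hE1p := hedge1 (x₁c + h) (by simp)
  rw [hIP1p, hIU1p] at hE1p
  have hIP2m : (∫ s in Icc (x₁c - h) (x₁c + h), pd2 Pu s (x₂c - h)) = (2) * h * A2 + (4) * h * x₂c * A5 + (6) * h * x₂c ^ 2 * A7 + (2) * h * x₁c * A4 + (-4) * h ^ 2 * A5 + (-12) * h ^ 2 * x₂c * A7 + (6) * h ^ 3 * A7 := by
    refine inner_eval hle1 _ ((1) * A2 + (2) * x₂c * A5 + (3) * x₂c ^ 2 * A7 + (-2) * h * A5 + (-6) * h * x₂c * A7 + (3) * h ^ 2 * A7) ((1) * A4) (0) (0) (0) _ (fun s => ?_) (by ring)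
    simp only [dP1, dP2, du1, du2]
    ring
  have hIU2m : (∫ s in Icc (x₁c - h) (x₁c + h), pd2 u s (x₂c - h)) = (2) * h * (c 0 1) + (4) * h * x₂c * (c 0 2) + (6) * h * x₂c ^ 2 * (c 0 3) + (8) * h * x₂c ^ 3 * (c 0 4) + (2) * h * x₁c * (c 1 1) + (4) * h * x₁c * x₂c * (c 1 2) + (6) * h * x₁c * x₂c ^ 2 * (c 1 3) + (2) * h * x₁c ^ 2 * (c 2 1) + (4) * h * x₁c ^ 2 * x₂c * (c 2 2) + (2) * h * x₁c ^ 3 * (c 3 1) + (-4) * h ^ 2 * (c 0 2) + (-12) * h ^ 2 * x₂c * (c 0 3) + (-24) * h ^ 2 * x₂c ^ 2 * (c 0 4) + (-4) * h ^ 2 * x₁c * (c 1 2) + (-12) * h ^ 2 * x₁c * x₂c * (c 1 3) + (-4) * h ^ 2 * x₁c ^ 2 * (c 2 2) + (2/3) * h ^ 3 * (c 2 1) + (6) * h ^ 3 * (c 0 3) + (4/3) * h ^ 3 * x₂c * (c 2 2) + (24) * h ^ 3 * x₂c * (c 0 4) + (2) * h ^ 3 * x₁c * (c 3 1) + (6)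 * h ^ 3 * x₁c * (c 1 3) + (-4/3) * h ^ 4 * (c 2 2) + (-8) * h ^ 4 * (c 0 4) := by
    refine inner_eval hle1 _ ((1) * (c 0 1) + (2) * x₂c * (c 0 2) + (3) * x₂c ^ 2 * (c 0 3) + (4) * x₂c ^ 3 * (c 0 4) + (-2) * h * (c 0 2) + (-6) * h * x₂c * (c 0 3) + (-12) * h * x₂c ^ 2 * (c 0 4) + (3) * h ^ 2 * (c 0 3) + (12) * h ^ 2 * x₂c * (c 0 4) + (-4) * h ^ 3 * (c 0 4)) ((1) * (c 1 1) + (2) * x₂c * (c 1 2) + (3) * x₂c ^ 2 * (c 1 3) + (-2) * h * (c 1 2) + (-6) * h * x₂c * (c 1 3) + (3) * h ^ 2 * (c 1 3)) ((1) * (c 2 1) + (2) * x₂c * (c 2 2) + (-2) * h * (c 2 2)) ((1) * (c 3 1)) (0) _ (fun s => ?_) (by ring)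
    simp only [dP1, dP2, du1, du2]
    ring
  have hE2m := hedge2 (x₂c - h) (by simp)
  rw [hIP2m, hIU2m] at hE2m
  have hIP2p : (∫ s in Icc (x₁c - h) (x₁c + h), pd2 Pu s (x₂c + h)) = (2) * h * A2 + (4) * h * x₂c * A5 + (6) * h * x₂c ^ 2 * A7 + (2) * h * x₁c * A4 + (4) * h ^ 2 * A5 + (12) * h ^ 2 * x₂c * A7 + (6) * h ^ 3 * A7 := by
    refine inner_eval hle1 _ ((1) * A2 + (2) * x₂c * A5 + (3) * x₂c ^ 2 * A7 + (2) * h * A5 + (6) * h * x₂c * A7 + (3) * h ^ 2 * A7) ((1) * A4) (0) (0) (0) _ (fun s => ?_) (by ring)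
    simp only [dP1, dP2, du1, du2]
    ring
  have hIU2p : (∫ s in Icc (x₁c - h) (x₁c + h), pd2 u s (x₂c + h)) = (2) * h * (c 0 1) + (4) * h * x₂c * (c 0 2) + (6) * h * x₂c ^ 2 * (c 0 3) + (8) * h * x₂c ^ 3 * (c 0 4) + (2) * h * x₁c * (c 1 1) + (4) * h * x₁c * x₂c * (c 1 2) + (6) * h * x₁c * x₂c ^ 2 * (c 1 3) + (2) * h * x₁c ^ 2 * (c 2 1) + (4) * h * x₁c ^ 2 * x₂c * (c 2 2) + (2) * h * x₁c ^ 3 * (c 3 1) + (4) * h ^ 2 * (c 0 2) + (12) * h ^ 2 * x₂c * (c 0 3) + (24) * h ^ 2 * x₂c ^ 2 * (c 0 4) + (4) * h ^ 2 * x₁c * (c 1 2) + (12) * h ^ 2 * x₁c * x₂c * (c 1 3) + (4) * h ^ 2 * x₁c ^ 2 * (c 2 2) + (2/3) * h ^ 3 * (c 2 1) + (6) * h ^ 3 * (c 0 3) + (4/3) * h ^ 3 * x₂c * (c 2 2) + (24) * h ^ 3 * x₂c * (c 0 4) + (2) * h ^ 3 * x₁c * (c 3 1) + (6) * h ^ 3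 * x₁c * (c 1 3) + (4/3) * h ^ 4 * (c 2 2) + (8) * h ^ 4 * (c 0 4) := by
    refine inner_eval hle1 _ ((1) * (c 0 1) + (2) * x₂c * (c 0 2) + (3) * x₂c ^ 2 * (c 0 3) + (4) * x₂c ^ 3 * (c 0 4) + (2) * h * (c 0 2) + (6) * h * x₂c * (c 0 3) + (12) * h * x₂c ^ 2 * (c 0 4) + (3) * h ^ 2 * (c 0 3) + (12) * h ^ 2 * x₂c * (c 0 4) + (4) * h ^ 3 * (c 0 4)) ((1) * (c 1 1) + (2) * x₂c * (c 1 2) + (3) * x₂c ^ 2 * (c 1 3) + (2) * h * (c 1 2) + (6) * h * x₂c * (c 1 3) + (3) * h ^ 2 * (c 1 3)) ((1) * (c 2 1) + (2) * x₂c * (c 2 2) + (2) * h * (c 2 2)) ((1) * (c 3 1)) (0) _ (fun s => ?_) (by ring)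
    simp only [dP1, dP2, du1, du2]
    ring
  have hE2p := hedge2 (x₂c + h) (by simp)
  rw [hIP2p, hIU2p] at hE2p
  rw [hL, hR1, hR2]
  linear_combination ((-2) * B4 + (-6) * h * B7 + (-6) * h * B6) * hVmm +
    ((2) * B4 + (6) * h * B7 + (-6) * h * B6) * hVmp +
    ((2) * B4 + (-6) * h * B7 + (6) * h * B6) * hVpm +
    ((-2) * B4 + (6) * h * B7 + (6) * h * B6) * hVpp +
    ((2) * B3 + (6) * x₁c * B6 + (-6) * h * B6) * hE1m +
    ((-2) * B3 + (-6) * x₁c * B6 + (-6) * h * B6) * hE1p +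
    ((2) * B5 + (6) * x₂c * B7 + (-6) * h * B7) * hE2m +
    ((-2) * B5 + (-6) * x₂c * B7 + (-6) * h * B7) * hE2p
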